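/- Let F be a finite set of hypotheses h : X → {0,1} containing the target c*, and let data be drawn i.i.d. from an instance-dependent noisy oracle with per-instance flip rates η(x) and maximum flip rate η_max < 1/2; set γ = 1 − 2η_max. If the sample size satisfies N ≥ 2·log(|F|/δ)/(ε²γ²), then with probability at least 1 − δ, every hypothesis h ∈ F whose noisy generalization error exceeds η + γε has empirical risk strictly greater than η + γε/2, while c* has empirical risk at most η + γε/2, where η is the average noise rate. -/

import Mathlib

open MeasureTheory Finset
open scoped ENNReal


lemma bern_pos {q : ℝ} (hq0 : 0 ≤ q) (hq1 : q ≤ 1) (s : ℝ) :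
    0 < 1 - q + q * Real.exp s := by
  rcases lt_or_eq_of_le hq1 with h | h
  · nlinarith [Real.exp_pos s, mul_nonneg hq0 (Real.exp_pos s).le]
  · subst h; simpa using Real.exp_pos s

lemma bern_mgf_le {q t : ℝ} (hq0 : 0 ≤ q) (hq1 : q ≤ 1) (ht : 0 ≤ t) :
    q * Real.exp t + (1 - q) ≤ Real.exp (q * t + t ^ 2 / 8) := by
  set u : ℝ → ℝ := fun s => 1 - q + q * Real.exp s with hu
  have hupos : ∀ s, 0 < u s := fun s => bern_pos hq0 hq1 s
  have hu' : ∀ s, HasDerivAt u (q * Real.exp s) s := fun s =>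
    ((Real.hasDerivAt_exp s).const_mul q).const_add (1 - q)
  set ψ : ℝ → ℝ := fun s => q + s / 4 - q * Real.exp s / u s with hψdef
  have hψ' : ∀ s, HasDerivAt ψ (1 / 4 - q * Real.exp s * (1 - q) / (u s) ^ 2) s := by
    intro s
    have h1 : HasDerivAt (fun s => q * Real.exp s / u s)
        ((q * Real.exp s * u s - q * Real.exp s * (q * Real.exp s)) / (u s) ^ 2) s :=
      ((Real.hasDerivAt_exp s).const_mul q).div (hu' s) (hupos s).ne'
    have h2 : HasDerivAt (fun s => q + s / 4) (1 / 4) s := by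
      simpa using ((hasDerivAt_id s).div_const 4).const_add q
    have := h2.sub h1
    refine this.congr_deriv ?_
    have : u s = 1 - q + q * Real.exp s := rfl
    rw [this]
    congr 1; congr 1
    ring
  have hψmono : Monotone ψ := by
    apply monotone_of_deriv_nonneg
    · exact fun s => (hψ' s).differentiableAt
    · intro s
      rw [(hψ' s).deriv]
      have hA : 0 ≤ q * Real.exp s := mul_nonneg hq0 (Real.exp_pos s).le
      have hB : 0 ≤ 1 - q := by linarith
      have husq : (0:ℝ) < (u s) ^ 2 := pow_pos (hupos s) 2
      have hle : q * Real.exp s * (1 - q) / (u s) ^ 2 ≤ 1 / 4 := by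
        rw [div_le_iff₀ husq]
        have huval : u s = 1 - q + q * Real.exp s := rfl
        nlinarith [sq_nonneg (q * Real.exp s - (1 - q))]
      linarith
  have hψ0 : ψ 0 = 0 := by
    have : u 0 = 1 := by simp [hu]
    simp [hψdef, this]
  set φ : ℝ → ℝ := fun s => q * s + s ^ 2 / 8 - Real.log (u s) with hφdef
  have hφ' : ∀ s, HasDerivAt φ (ψ s) s := by
    intro s
    have h1 : HasDerivAt (fun s => Real.log (u s)) (q * Real.exp s / u s) s :=
      (hu' s).log (hupos s).ne'
    have h2 : HasDerivAt (fun s : ℝ => q * s) q s := by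
      simpa using (hasDerivAt_id s).const_mul q
    have h3 : HasDerivAt (fun s : ℝ => s ^ 2 / 8) (s / 4) s := by
      have := (hasDerivAt_pow 2 s).div_const 8
      refine this.congr_deriv ?_
      norm_num
      ring
    have := (h2.add h3).sub h1
    exact this
  have hφmono : MonotoneOn φ (Set.Ici 0) := by
    apply monotoneOn_of_deriv_nonneg (convex_Ici 0)
    · exact fun s _ => ((hφ' s).differentiableAt).continuousAt.continuousWithinAt
    · exact fun s _ => ((hφ' s).differentiableAt).differentiableWithinAt
    · intro s hs
      rw [(hφ' s).deriv]
      have : (0:ℝ) ≤ s := le_of_lt (by simpa using hs)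
      calc (0:ℝ) = ψ 0 := hψ0.symm
        _ ≤ ψ s := hψmono this
  have hφ0 : φ 0 = 0 := by
    have : u 0 = 1 := by simp [hu]
    simp [hφdef, this]
  have hφt : 0 ≤ φ t := by
    rw [← hφ0]
    exact hφmono (by simp) (by simpa using ht) ht
  have hlog : Real.log (u t) ≤ q * t + t ^ 2 / 8 := by
    simp only [hφdef] at hφt; linarith
  have := (Real.log_le_iff_le_exp (hupos t)).mp hlog
  have huval : u t = 1 - q + q * Real.exp t := rfl
  linarith

open scoped Classical in
lemma chernoff {Ω : Type*} [MeasurableSpace Ω] (D : Measure Ω) [IsProbabilityMeasure D]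
    {C : Set Ω} (hC : MeasurableSet C) (N : ℕ) {a : ℝ} (ha : 0 ≤ a) :
    Measure.pi (fun _ : Fin N => D)
      {s : Fin N → Ω | (N : ℝ) * ((D C).toReal + a) ≤
        ((Finset.univ.filter fun i => s i ∈ C).card : ℝ)} ≤
      ENNReal.ofReal (Real.exp (-2 * N * a ^ 2)) := by
  set μ := Measure.pi (fun _ : Fin N => D) with hμ
  set q : ℝ := (D C).toReal with hqdef
  have hq0 : 0 ≤ q := ENNReal.toReal_nonneg
  have hq1 : q ≤ 1 := by
    rw [hqdef]
    exact ENNReal.toReal_le_of_le_ofReal one_pos.le (by simpa using prob_le_one (μ := D) (s := C))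
  set t : ℝ := 4 * a with htdef
  have ht : 0 ≤ t := by positivity
  set m : ℝ := (N : ℝ) * (q + a) with hmdef
  set P : Finset (Finset (Fin N)) :=
    Finset.univ.powerset.filter (fun T => m ≤ (T.card : ℝ)) with hP
  set atom : Finset (Fin N) → Set (Fin N → Ω) :=
    fun T => Set.pi Set.univ (fun i => if i ∈ T then C else Cᶜ) with hatom
  -- inclusion into union of atoms
  have hincl : {s : Fin N → Ω | m ≤ ((Finset.univ.filter fun i => s i ∈ C).card : ℝ)} ⊆
      ⋃ T ∈ P, atom T := by
    intro s hs
    refine Set.mem_iUnion₂.mpr ⟨Finset.univ.filter (fun i => s i ∈ C), ?_, ?_⟩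
    · simp only [hP, Finset.mem_filter, Finset.mem_powerset]
      exact ⟨Finset.filter_subset _ _, hs⟩
    · intro i _
      by_cases h : s i ∈ C <;> simp [h]
  -- measure of an atom
  have hatomval : ∀ T : Finset (Fin N),
      μ (atom T) = (D C) ^ T.card * (D Cᶜ) ^ (N - T.card) := by
    intro T
    rw [hμ, hatom]
    rw [Measure.pi_pi]
    have : ∀ i : Fin N, D (if i ∈ T then C else Cᶜ) = if i ∈ T then D C else D Cᶜ := by
      intro i; by_cases h : i ∈ T <;> simp [h]
    simp_rw [this]
    rw [Finset.prod_ite, Finset.prod_const, Finset.prod_const]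
    congr 1
    · congr 1; simp
    · congr 1
      rw [Finset.filter_not]
      simp [Finset.card_sdiff_of_subset (Finset.subset_univ T), Finset.filter_mem_eq_inter]
  -- per-term bound
  have hterm : ∀ T ∈ P, (D C) ^ T.card * (D Cᶜ) ^ (N - T.card) ≤
      ENNReal.ofReal (Real.exp (-(t * m))) *
        ((ENNReal.ofReal (Real.exp t) * D C) ^ T.card * (D Cᶜ) ^ (N - T.card)) := by
    intro T hT
    have hcard : m ≤ (T.card : ℝ) := (Finset.mem_filter.mp hT).2
    have hone : (1 : ℝ≥0∞) ≤
        ENNReal.ofReal (Real.exp (-(t * m))) * ENNReal.ofReal (Real.exp t) ^ T.card := by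
      rw [← ENNReal.ofReal_pow (Real.exp_pos t).le, ← Real.exp_nat_mul,
        ← ENNReal.ofReal_mul (Real.exp_pos _).le, ← Real.exp_add]
      rw [show (1 : ℝ≥0∞) = ENNReal.ofReal (Real.exp 0) by simp]
      apply ENNReal.ofReal_le_ofReal
      apply Real.exp_le_exp.mpr
      nlinarith
    calc (D C) ^ T.card * (D Cᶜ) ^ (N - T.card)
        = 1 * ((D C) ^ T.card * (D Cᶜ) ^ (N - T.card)) := (one_mul _).symm
      _ ≤ (ENNReal.ofReal (Real.exp (-(t * m))) * ENNReal.ofReal (Real.exp t) ^ T.card) *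
            ((D C) ^ T.card * (D Cᶜ) ^ (N - T.card)) := by
          exact mul_le_mul_left hone _
      _ = ENNReal.ofReal (Real.exp (-(t * m))) *
            ((ENNReal.ofReal (Real.exp t) * D C) ^ T.card * (D Cᶜ) ^ (N - T.card)) := by
          rw [mul_pow]; ring
  -- the binomial sum
  have hsum : ∑ T ∈ (Finset.univ : Finset (Fin N)).powerset,
      (ENNReal.ofReal (Real.exp t) * D C) ^ T.card * (D Cᶜ) ^ (N - T.card) =
      (ENNReal.ofReal (Real.exp t) * D C + D Cᶜ) ^ N := by
    have := Finset.prod_add (fun _ : Fin N => ENNReal.ofReal (Real.exp t) * D C)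
      (fun _ : Fin N => D Cᶜ) Finset.univ
    simp only [Finset.prod_const] at this
    rw [Finset.card_univ, Fintype.card_fin] at this
    rw [this]
    apply Finset.sum_congr rfl
    intro T hT
    congr 1
    congr 1
    rw [Finset.card_sdiff_of_subset (Finset.mem_powerset.mp hT)]
    simp
  -- the single-factor bound
  have hfac : ENNReal.ofReal (Real.exp t) * D C + D Cᶜ ≤
      ENNReal.ofReal (Real.exp (q * t + t ^ 2 / 8)) := by
    have hDC : D C = ENNReal.ofReal q := (ENNReal.ofReal_toReal (measure_ne_top D C)).symm
    have hDCc : D Cᶜ = ENNReal.ofReal (1 - q) := by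
      rw [prob_compl_eq_one_sub hC, hDC, ← ENNReal.ofReal_one,
        ← ENNReal.ofReal_sub _ hq0]
    rw [hDC, hDCc, ← ENNReal.ofReal_mul (Real.exp_pos t).le,
      ← ENNReal.ofReal_add (by positivity) (by linarith)]
    apply ENNReal.ofReal_le_ofReal
    have := bern_mgf_le hq0 hq1 ht
    linarith [this]
  calc μ {s : Fin N → Ω | m ≤ ((Finset.univ.filter fun i => s i ∈ C).card : ℝ)}
      ≤ μ (⋃ T ∈ P, atom T) := measure_mono hincl
    _ ≤ ∑ T ∈ P, μ (atom T) := measure_biUnion_finset_le P atom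
    _ = ∑ T ∈ P, (D C) ^ T.card * (D Cᶜ) ^ (N - T.card) := Finset.sum_congr rfl fun T _ => hatomval T
    _ ≤ ∑ T ∈ P, ENNReal.ofReal (Real.exp (-(t * m))) *
          ((ENNReal.ofReal (Real.exp t) * D C) ^ T.card * (D Cᶜ) ^ (N - T.card)) :=
        Finset.sum_le_sum hterm
    _ ≤ ∑ T ∈ (Finset.univ : Finset (Fin N)).powerset, ENNReal.ofReal (Real.exp (-(t * m))) *
          ((ENNReal.ofReal (Real.exp t) * D C) ^ T.card * (D Cᶜ) ^ (N - T.card)) :=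
        Finset.sum_le_sum_of_subset (Finset.filter_subset _ _)
    _ = ENNReal.ofReal (Real.exp (-(t * m))) *
          (ENNReal.ofReal (Real.exp t) * D C + D Cᶜ) ^ N := by rw [← Finset.mul_sum, hsum]
    _ ≤ ENNReal.ofReal (Real.exp (-(t * m))) *
          ENNReal.ofReal (Real.exp (q * t + t ^ 2 / 8)) ^ N := by
        exact mul_le_mul_right (pow_le_pow_left' hfac N) _
    _ = ENNReal.ofReal (Real.exp (-2 * N * a ^ 2)) := by
        rw [← ENNReal.ofReal_pow (Real.exp_pos _).le, ← Real.exp_nat_mul,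
          ← ENNReal.ofReal_mul (Real.exp_pos _).le, ← Real.exp_add]
        congr 1
        rw [hmdef, htdef]
        ring

-- helper: measure bounded by sum of singleton masses
lemma meas_le_sum {X : Type*} [Fintype X] [MeasurableSpace X] (D : Measure (X × Bool))
    (v : X → Bool) (w : X → ℝ) (hwnn : ∀ x, 0 ≤ w x)
    (hw : ∀ x, D {(x, v x)} = ENNReal.ofReal (w x)) :
    D {ω : X × Bool | ω.2 = v ω.1} ≤ ENNReal.ofReal (∑ x, w x) := by
  have hsub : {ω : X × Bool | ω.2 = v ω.1} = ⋃ x ∈ (Finset.univ : Finset X), {(x, v x)} := by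
    ext ⟨x, z⟩
    simp only [Set.mem_setOf_eq, Set.mem_iUnion, Set.mem_singleton_iff, Finset.mem_univ,
      exists_true_left, Prod.mk.injEq]
    aesop
  rw [hsub]
  calc D (⋃ x ∈ (Finset.univ : Finset X), {(x, v x)})
      ≤ ∑ x, D {(x, v x)} := measure_biUnion_finset_le _ _
    _ = ∑ x, ENNReal.ofReal (w x) := Finset.sum_congr rfl fun x _ => hw x
    _ = ENNReal.ofReal (∑ x, w x) := (ENNReal.ofReal_sum_of_nonneg fun x _ => hwnn x).symm

set_option maxHeartbeats 1000000

/-- Sample-complexity bound for ERM over a finite hypothesis class under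
instance-dependent classification noise with maximum flip rate η_max < 1/2: if
N ≥ 2 log(|F|/δ)/(ε²γ²) with γ = 1 - 2η_max, then with probability ≥ 1 - δ over the
i.i.d. noisy sample, every hypothesis with noisy generalization error exceeding
η̄ + γε has empirical risk > η̄ + γε/2, while the target c* has empirical risk
≤ η̄ + γε/2. -/
theorem stmt6 {X : Type*} [Fintype X] [MeasurableSpace X]
    (pX : X → ℝ) (hpX0 : ∀ x, 0 ≤ pX x) (hpX1 : ∑ x, pX x = 1)
    (η : X → ℝ) (ηmax : ℝ) (hη0 : ∀ x, 0 ≤ η x) (hηle : ∀ x, η x ≤ ηmax)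
    (hηmax : ηmax < 1 / 2)
    (cstar : X → Bool) (F : Finset (X → Bool)) (hc : cstar ∈ F)
    (ε δ γ ηbar : ℝ) (hε : 0 < ε) (hδ : 0 < δ)
    (hγ : γ = 1 - 2 * ηmax)
    (hηbar : ηbar = ∑ x, pX x * η x)
    (N : ℕ) (hN : 2 * Real.log (F.card / δ) / (ε ^ 2 * γ ^ 2) ≤ N)
    (D : Measure (X × Bool)) [IsProbabilityMeasure D]
    (hD : ∀ x z, D {(x, z)} =
      ENNReal.ofReal (pX x * if z = cstar x then 1 - η x else η x))
    (L : (X → Bool) → ℝ)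
    (hL : ∀ h : X → Bool, L h = ∑ x, pX x * (if h x = cstar x then η x else 1 - η x)) :
    ENNReal.ofReal (1 - δ) ≤
      (Measure.pi fun _ : Fin N => D)
        {s | (∀ h ∈ F, ηbar + γ * ε < L h →
                ηbar + γ * ε / 2 <
                  ((Finset.univ.filter fun i => h (s i).1 ≠ (s i).2).card : ℝ) / N) ∧
             ((Finset.univ.filter fun i => cstar (s i).1 ≠ (s i).2).card : ℝ) / N ≤
               ηbar + γ * ε / 2} := by
  classical
  have hγpos : 0 < γ := by rw [hγ]; linarith
  set a : ℝ := γ * ε / 2 with hadef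
  have ha : 0 < a := by positivity
  have hη1 : ∀ x, η x ≤ 1 := fun x => by linarith [hηle x]
  have hηbar0 : 0 ≤ ηbar := hηbar ▸ Finset.sum_nonneg fun x _ => mul_nonneg (hpX0 x) (hη0 x)
  have hLc : L cstar = ηbar := by rw [hL, hηbar]; simp
  have hcard1 : 1 ≤ F.card := Finset.card_pos.mpr ⟨cstar, hc⟩
  have hLle1 : ∀ h : X → Bool, L h ≤ 1 := by
    intro h
    rw [hL]
    calc ∑ x, pX x * (if h x = cstar x then η x else 1 - η x)
        ≤ ∑ x, pX x := by
          apply Finset.sum_le_sum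
          intro x _
          have h1 : (if h x = cstar x then η x else 1 - η x) ≤ 1 := by
            by_cases hx : h x = cstar x <;> simp [hx] <;> linarith [hη0 x, hη1 x]
          nlinarith [hpX0 x, mul_le_mul_of_nonneg_left h1 (hpX0 x)]
      _ = 1 := hpX1
  set μ := Measure.pi (fun _ : Fin N => D) with hμ
  set β := ENNReal.ofReal (Real.exp (-2 * N * a ^ 2)) with hβ
  have hβle : β ≤ ENNReal.ofReal (δ / F.card) := by
    apply ENNReal.ofReal_le_ofReal
    have hcpos : (0:ℝ) < F.card := by exact_mod_cast hcard1
    have hdpos : (0:ℝ) < δ / F.card := by positivity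
    rw [← Real.exp_log hdpos]
    apply Real.exp_le_exp.mpr
    have hlog : Real.log (δ / F.card) = - Real.log ((F.card : ℝ) / δ) := by
      rw [← Real.log_inv]
      congr 1
      field_simp
    rw [hlog]
    have h2 : 2 * Real.log ((F.card : ℝ) / δ) ≤ N * (ε ^ 2 * γ ^ 2) := by
      rw [div_le_iff₀ (by positivity : (0:ℝ) < ε ^ 2 * γ ^ 2)] at hN
      linarith
    have ha2 : a ^ 2 = ε ^ 2 * γ ^ 2 / 4 := by rw [hadef]; ring
    nlinarith [h2]
  -- measurable hulls
  set Ch : (X → Bool) → Set (X × Bool) :=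
    fun h => toMeasurable D {ω : X × Bool | h ω.1 = ω.2} with hCh
  set Cc : Set (X × Bool) := toMeasurable D {ω : X × Bool | ¬ cstar ω.1 = ω.2} with hCc
  have hDCh : ∀ h : X → Bool, D (Ch h) ≤ ENNReal.ofReal (1 - L h) := by
    intro h
    rw [hCh, measure_toMeasurable]
    have hset : {ω : X × Bool | h ω.1 = ω.2} = {ω : X × Bool | ω.2 = h ω.1} := by
      ext ω; exact eq_comm
    rw [hset]
    have hsum : ∑ x, pX x * (if h x = cstar x then 1 - η x else η x) = 1 - L h := by
      have e : ∀ x, pX x * (if h x = cstar x then 1 - η x else η x)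
          = pX x - pX x * (if h x = cstar x then η x else 1 - η x) := by
        intro x; by_cases hx : h x = cstar x <;> simp [hx] <;> ring
      simp_rw [e]
      rw [Finset.sum_sub_distrib, hpX1, hL]
    rw [← hsum]
    apply meas_le_sum
    · intro x
      by_cases hx : h x = cstar x <;> simp [hx]
      · nlinarith [hpX0 x, hη1 x]
      · exact mul_nonneg (hpX0 x) (hη0 x)
    · intro x
      exact hD x (h x)
  have hqhle : ∀ h : X → Bool, (D (Ch h)).toReal ≤ 1 - L h := fun h =>
    ENNReal.toReal_le_of_le_ofReal (by linarith [hLle1 h]) (hDCh h)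
  have hDCc : D Cc ≤ ENNReal.ofReal ηbar := by
    rw [hCc, measure_toMeasurable]
    have hset : {ω : X × Bool | ¬ cstar ω.1 = ω.2} = {ω : X × Bool | ω.2 = !(cstar ω.1)} := by
      ext ⟨x, z⟩
      cases hcx : cstar x <;> cases z <;> simp [hcx]
    rw [hset]
    have hsum : ∑ x, pX x * η x = ηbar := hηbar.symm
    rw [← hsum]
    refine meas_le_sum D (fun x => !(cstar x)) (fun x => pX x * η x)
      (fun x => mul_nonneg (hpX0 x) (hη0 x)) ?_
    intro x
    rw [hD x (!(cstar x))]
    congr 1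
    simp [Bool.not_ne_self]
  have hqc : (D Cc).toReal ≤ ηbar := ENNReal.toReal_le_of_le_ofReal hηbar0 hDCc
  set G : Set (Fin N → X × Bool) :=
    {s | (∀ h ∈ F, ηbar + γ * ε < L h →
                ηbar + γ * ε / 2 <
                  ((Finset.univ.filter fun i => h (s i).1 ≠ (s i).2).card : ℝ) / N) ∧
             ((Finset.univ.filter fun i => cstar (s i).1 ≠ (s i).2).card : ℝ) / N ≤
               ηbar + γ * ε / 2} with hG
  set Ebad : (X → Bool) → Set (Fin N → X × Bool) := fun h =>
    {s : Fin N → X × Bool | (N : ℝ) * ((D (Ch h)).toReal + a) ≤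
        ((Finset.univ.filter fun i => s i ∈ Ch h).card : ℝ)} with hEbad
  set Ecs : Set (Fin N → X × Bool) :=
    {s : Fin N → X × Bool | (N : ℝ) * ((D Cc).toReal + a) ≤
        ((Finset.univ.filter fun i => s i ∈ Cc).card : ℝ)} with hEcs
  set Fbad := F.filter (fun h => ηbar + γ * ε < L h) with hFbad
  have hsub : Gᶜ ⊆ (⋃ h ∈ Fbad, Ebad h) ∪ Ecs := by
    intro s hs
    rw [Set.mem_compl_iff, hG, Set.mem_setOf_eq, not_and_or] at hs
    rcases hs with hs | hs
    · left
      push_neg at hs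
      obtain ⟨h, hhF, hbad, hle⟩ := hs
      refine Set.mem_iUnion₂.mpr ⟨h, Finset.mem_filter.mpr ⟨hhF, hbad⟩, ?_⟩
      rw [hEbad, Set.mem_setOf_eq]
      set k := (Finset.univ.filter fun i => h (s i).1 ≠ (s i).2).card with hk
      have hkN : (k : ℝ) ≤ N * (ηbar + γ * ε / 2) := by
        rcases Nat.eq_zero_or_pos N with h0 | hpos
        · subst h0
          have : k = 0 := by simp [hk]
          simp [this]
        · have hNpos : (0:ℝ) < N := by exact_mod_cast hpos
          rw [div_le_iff₀ hNpos] at hle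
          linarith [hle]
      have hkle : k ≤ N := by
        rw [hk]
        calc (Finset.univ.filter fun i => h (s i).1 ≠ (s i).2).card
            ≤ (Finset.univ : Finset (Fin N)).card := Finset.card_le_card (Finset.filter_subset _ _)
          _ = N := by simp
      have hcount : N - k ≤ (Finset.univ.filter fun i => s i ∈ Ch h).card := by
        have h1 : (Finset.univ.filter fun i => h (s i).1 = (s i).2) ⊆
            (Finset.univ.filter fun i => s i ∈ Ch h) := by
          intro i hi
          rw [Finset.mem_filter] at hi ⊢
          exact ⟨hi.1, subset_toMeasurable D _ hi.2⟩
        have h2 : (Finset.univ.filter fun i => h (s i).1 = (s i).2).card + k = N := by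
          rw [hk]
          have := Finset.card_filter_add_card_filter_not
            (s := (Finset.univ : Finset (Fin N))) (p := fun i => h (s i).1 = (s i).2)
          simpa using this
        have := Finset.card_le_card h1
        omega
      have hq : (D (Ch h)).toReal ≤ 1 - L h := hqhle h
      have hNk : ((N - k : ℕ) : ℝ) = (N : ℝ) - k := by
        push_cast [hkle]
        ring
      have hfin : ((N - k : ℕ) : ℝ) ≤ ((Finset.univ.filter fun i => s i ∈ Ch h).card : ℝ) := by
        exact_mod_cast hcount
      rw [hNk] at hfin
      have hNnn : (0:ℝ) ≤ N := Nat.cast_nonneg N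
      calc (N : ℝ) * ((D (Ch h)).toReal + a)
          ≤ (N : ℝ) * (1 - L h + a) := by
            apply mul_le_mul_of_nonneg_left _ hNnn
            linarith
        _ ≤ (N : ℝ) - k := by nlinarith [hbad, hkN]
        _ ≤ ((Finset.univ.filter fun i => s i ∈ Ch h).card : ℝ) := hfin
    · right
      rw [hEcs, Set.mem_setOf_eq]
      push_neg at hs
      rcases Nat.eq_zero_or_pos N with h0 | hpos
      · exfalso
        subst h0
        norm_num at hs
        linarith
      · have hNpos : (0:ℝ) < N := by exact_mod_cast hpos
        rw [lt_div_iff₀ hNpos] at hs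
        have hsubc : (Finset.univ.filter fun i => cstar (s i).1 ≠ (s i).2) ⊆
            (Finset.univ.filter fun i => s i ∈ Cc) := by
          intro i hi
          rw [Finset.mem_filter] at hi ⊢
          exact ⟨hi.1, subset_toMeasurable D _ hi.2⟩
        have hcc := Finset.card_le_card hsubc
        have hcc' : ((Finset.univ.filter fun i => cstar (s i).1 ≠ (s i).2).card : ℝ) ≤
            ((Finset.univ.filter fun i => s i ∈ Cc).card : ℝ) := by exact_mod_cast hcc
        nlinarith [hqc]
  have hFbadcard : Fbad.card ≤ F.card - 1 := by
    have hnot : cstar ∉ Fbad := by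
      rw [hFbad, Finset.mem_filter]
      rintro ⟨-, hlt⟩
      rw [hLc] at hlt
      nlinarith
    have : Fbad ⊆ F.erase cstar := by
      intro h hh
      rw [Finset.mem_erase]
      refine ⟨?_, (Finset.mem_filter.mp hh).1⟩
      rintro rfl
      exact hnot hh
    calc Fbad.card ≤ (F.erase cstar).card := Finset.card_le_card this
      _ = F.card - 1 := Finset.card_erase_of_mem hc
  have key : μ Gᶜ ≤ ENNReal.ofReal δ := by
    calc μ Gᶜ ≤ μ ((⋃ h ∈ Fbad, Ebad h) ∪ Ecs) := measure_mono hsub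
      _ ≤ μ (⋃ h ∈ Fbad, Ebad h) + μ Ecs := measure_union_le _ _
      _ ≤ (∑ h ∈ Fbad, μ (Ebad h)) + μ Ecs :=
          add_le_add_left (measure_biUnion_finset_le _ _) _
      _ ≤ (∑ _h ∈ Fbad, β) + β := by
          apply add_le_add
          · apply Finset.sum_le_sum
            intro h _
            exact chernoff D (measurableSet_toMeasurable D _) N ha.le
          · exact chernoff D (measurableSet_toMeasurable D _) N ha.le
      _ = Fbad.card • β + β := by rw [Finset.sum_const]
      _ ≤ (F.card - 1) • β + β := by
          apply add_le_add_left
          exact nsmul_le_nsmul_left (zero_le : (0 : ℝ≥0∞) ≤ β) hFbadcard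
      _ = F.card • β := by
          rw [← succ_nsmul]
          congr 1
          omega
      _ = (F.card : ℝ≥0∞) * β := nsmul_eq_mul _ _
      _ ≤ (F.card : ℝ≥0∞) * ENNReal.ofReal (δ / F.card) := mul_le_mul_right hβle _
      _ = ENNReal.ofReal δ := by
          rw [← ENNReal.ofReal_natCast, ← ENNReal.ofReal_mul (Nat.cast_nonneg _)]
          congr 1
          have : (F.card : ℝ) ≠ 0 := by positivity
          field_simp
  have h2 : (1 : ℝ≥0∞) ≤ μ G + μ Gᶜ := by
    calc (1 : ℝ≥0∞) = μ Set.univ := measure_univ.symm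
      _ = μ (G ∪ Gᶜ) := by rw [Set.union_compl_self]
      _ ≤ μ G + μ Gᶜ := measure_union_le _ _
  calc ENNReal.ofReal (1 - δ) = 1 - ENNReal.ofReal δ := by
        rw [ENNReal.ofReal_sub 1 hδ.le, ENNReal.ofReal_one]
    _ ≤ μ G := by
        rw [tsub_le_iff_right]
        exact h2.trans (add_le_add_right key _)
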